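/- Let b > 0, p > 0, q > 0. A pair (u, v) with u > 0 and v > 0 satisfies the equilibrium equations b u (1 - u) = v and p u v + q u v^2 = v if and only if s := 1/u satisfies s > 1, f(s) = 0 where f(s) = s^3 - p s^2 - q b (s - 1), and v = b(s-1)/s^2. -/

import Mathlib

/-- For `b, p, q > 0`, a pair `(u, v)` with `u, v > 0` satisfies the
equilibrium equations `b u (1-u) = v` and `p u v + q u v^2 = v` iff `s = 1/u`
satisfies `s > 1`, `f(s) = 0` and `v = b(s-1)/s^2`. -/
theorem equilibrium_iff_root (b p q : ℝ) (hb : 0 < b) (hp : 0 < p) (hq : 0 < q)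
    (f : ℝ → ℝ) (hf : ∀ s, f s = s ^ 3 - p * s ^ 2 - q * b * (s - 1))
    (u v : ℝ) (hu : 0 < u) (hv : 0 < v) :
    (b * u * (1 - u) = v ∧ p * u * v + q * u * v ^ 2 = v) ↔
      (1 < 1 / u ∧ f (1 / u) = 0 ∧ v = b * (1 / u - 1) / (1 / u) ^ 2) := by
  have hu0 : u ≠ 0 := ne_of_gt hu
  have hv0 : v ≠ 0 := ne_of_gt hv
  constructor
  · rintro ⟨h1, h2⟩
    have hbu : 0 < b * u := mul_pos hb hu
    have hu1 : u < 1 := by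
      by_contra h
      push_neg at h
      nlinarith [mul_pos hb hu]
    have hs : 1 < 1 / u := by
      rw [lt_div_iff₀ hu]; linarith
    have hveq : v = b * (1 / u - 1) / (1 / u) ^ 2 := by
      rw [← h1]; field_simp
    refine ⟨hs, ?_, hveq⟩
    have hdiv : p * u + q * u * v = 1 :=
      mul_right_cancel₀ hv0 (by linear_combination h2)
    have hdiv' : p * u + q * u * (b * u * (1 - u)) = 1 := by rw [h1]; exact hdiv
    rw [hf]
    field_simp
    linear_combination -hdiv'
  · rintro ⟨hs, hfz, hveq⟩
    rw [hf] at hfz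
    have h1 : b * u * (1 - u) = v := by
      rw [hveq]; field_simp
    refine ⟨h1, ?_⟩
    have key : p * u + q * u * v = 1 := by
      rw [← h1]
      field_simp at hfz
      have h3 : (p * u + q * u * (b * u * (1 - u)) - 1) * u ^ 3 = 0 := by
        linear_combination -u ^ 3 * hfz
      have h4 : u ^ 3 ≠ 0 := pow_ne_zero 3 hu0
      have := (mul_eq_zero.mp h3).resolve_right h4
      linarith
    linear_combination v * key
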